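/- Let |q| < 1, |ρ| < 1, x, y ∈ S(q), and let i, j, m ≥ 0 be integers. Then γ_{i,j}(x,y|ρ q^m, q) = Σ_{k=0}^{m} (-1)^k [m choose k]_q q^{k(k-1)/2} (1-q)^k ρ^k γ_{i+k,j+k}(x,y|ρ,q). -/

import Mathlib

open Finset MeasureTheory

noncomputable section

/-- [n]_q = 1 + q + ... + q^{n-1} -/
def qNat (q : ℝ) (n : ℕ) : ℝ := ∑ j ∈ Finset.range n, q ^ j

/-- [n]_q! -/
def qFact (q : ℝ) : ℕ → ℝ
  | 0 => 1
  | n + 1 => qFact q n * qNat q (n + 1)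

/-- q-binomial coefficient -/
def qBinom (q : ℝ) (n k : ℕ) : ℝ :=
  if k ≤ n then qFact q n / (qFact q (n - k) * qFact q k) else 0

/-- q-Pochhammer symbol (a;q)_n -/
def qPoch (a q : ℝ) (n : ℕ) : ℝ := ∏ j ∈ Finset.range n, (1 - a * q ^ j)

/-- q-Pochhammer symbol (a;q)_∞ -/
def qPochInf (a q : ℝ) : ℝ := ∏' j : ℕ, (1 - a * q ^ j)

/-- continuous q-Hermite polynomials H_n(x|q) -/
def qHermite (q : ℝ) : ℕ → ℝ → ℝ
  | 0, _ => 1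
  | 1, x => x
  | n + 2, x => x * qHermite q (n + 1) x - qNat q (n + 1) * qHermite q n x

/-- big q-Hermite polynomials H_n(x|a,q) -/
def bigqHermite (q a : ℝ) : ℕ → ℝ → ℝ
  | 0, _ => 1
  | 1, x => x - a
  | n + 2, x => (x - a * q ^ (n + 1)) * bigqHermite q a (n + 1) x -
      qNat q (n + 1) * bigqHermite q a n x

/-- rescaled Al-Salam--Chihara polynomials P_n(x|y,ρ,q) -/
def ascP (q y ρ : ℝ) : ℕ → ℝ → ℝ
  | 0, _ => 1
  | 1, x => x - ρ * y
  | n + 2, x => (x - ρ * y * q ^ (n + 1)) * ascP q y ρ (n + 1) x -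
      qNat q (n + 1) * (1 - ρ ^ 2 * q ^ n) * ascP q y ρ n x

/-- generating function φ_H(x|t,q) of the q-Hermite polynomials -/
def phiH (q t x : ℝ) : ℝ := ∑' n : ℕ, t ^ n / qFact q n * qHermite q n x

/-- γ_{i,j}(x,y|ρ,q) -/
def gammaPM (q ρ : ℝ) (i j : ℕ) (x y : ℝ) : ℝ :=
  ∑' n : ℕ, ρ ^ n / qFact q n * qHermite q (n + i) x * qHermite q (n + j) y

/-- the polynomials Q_{i,j}(x,y|ρ,q) -/
def Qpoly (q ρ : ℝ) (i j : ℕ) (x y : ℝ) : ℝ :=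
  ∑ s ∈ Finset.range (j + 1),
    (-1 : ℝ) ^ s * q ^ (s * (s - 1) / 2) * qBinom q j s * ρ ^ s * qHermite q (j - s) y *
      ascP q y ρ (i + s) x / qPoch (ρ ^ 2) q (i + s)

/-- the interval S(q) = [-2/√(1-q), 2/√(1-q)] -/
def Sq (q : ℝ) : Set ℝ := Set.Icc (-(2 / Real.sqrt (1 - q))) (2 / Real.sqrt (1 - q))

/-- ω(x,y|ρ) -/
def omegaPM (x y ρ : ℝ) : ℝ :=
  (1 - ρ ^ 2) ^ 2 - 4 * ρ * (1 + ρ ^ 2) * x * y + 4 * ρ ^ 2 * (x ^ 2 + y ^ 2)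

/-- l(x|a) -/
def lPM (x a : ℝ) : ℝ := (1 + a) ^ 2 - 4 * a * x ^ 2

/-- the q-Normal density f_N(x|q) -/
def fN (q x : ℝ) : ℝ :=
  Real.sqrt ((1 - q) * (4 - (1 - q) * x ^ 2)) * qPochInf q q / (2 * Real.pi) *
    ∏' j : ℕ, lPM (x * Real.sqrt (1 - q) / 2) (q ^ (j + 1))

/-- the (q,ρ)-Conditional Normal density f_CN(x|y,ρ,q) -/
def fCN (q ρ x y : ℝ) : ℝ :=
  fN q x * qPochInf (ρ ^ 2) q /
    ∏' j : ℕ, omegaPM (x * Real.sqrt (1 - q) / 2) (y * Real.sqrt (1 - q) / 2) (ρ * q ^ j)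

/-- the (ρ,q)-bivariate Normal density f_{2D}(x,y|ρ,q) -/
def f2D (q ρ x y : ℝ) : ℝ := fCN q ρ x y * fN q y

variable {q : ℝ}

lemma one_sub_mul_qNat (n : ℕ) : (1 - q) * qNat q n = 1 - q ^ n := by
  have := geom_sum_mul q n
  unfold qNat; nlinarith [this]

lemma qNat_pos (hq : |q| < 1) (n : ℕ) : 0 < qNat q (n + 1) := by
  have h1 : (0:ℝ) < 1 - q := by have := abs_lt.mp hq; linarith
  have h2 : |q ^ (n+1)| < 1 := by
    rw [abs_pow]
    exact pow_lt_one₀ (abs_nonneg q) hq (Nat.succ_ne_zero n)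
  have h3 : (0:ℝ) < 1 - q ^ (n+1) := by have := abs_lt.mp h2; linarith
  have := one_sub_mul_qNat (q := q) (n + 1)
  nlinarith

lemma qFact_pos (hq : |q| < 1) (n : ℕ) : 0 < qFact q n := by
  induction n with
  | zero => norm_num [qFact]
  | succ n ih => exact mul_pos ih (qNat_pos hq n)

lemma qFact_ne_zero (hq : |q| < 1) (n : ℕ) : qFact q n ≠ 0 := (qFact_pos hq n).ne'

lemma qNat_add (a b : ℕ) : qNat q (a + b) = qNat q a + q ^ a * qNat q b := by
  unfold qNat
  rw [Finset.sum_range_add, Finset.mul_sum]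
  congr 1
  exact Finset.sum_congr rfl fun i _ => by rw [pow_add]

lemma qBinom_le {n k : ℕ} (h : k ≤ n) :
    qBinom q n k = qFact q n / (qFact q (n - k) * qFact q k) := if_pos h

lemma qBinom_add (a b : ℕ) : qBinom q (a + b) a = qFact q (a + b) / (qFact q b * qFact q a) := by
  rw [qBinom_le (Nat.le_add_right a b), Nat.add_sub_cancel_left]

lemma qBinom_gt {n k : ℕ} (h : n < k) : qBinom q n k = 0 := if_neg (by omega)

lemma qBinom_self (hq : |q| < 1) (n : ℕ) : qBinom q n n = 1 := by
  rw [qBinom_le le_rfl, Nat.sub_self]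
  show qFact q n / (1 * qFact q n) = 1
  rw [one_mul, div_self (qFact_ne_zero hq n)]

lemma qBinom_zero (hq : |q| < 1) (n : ℕ) : qBinom q n 0 = 1 := by
  rw [qBinom_le (Nat.zero_le n), Nat.sub_zero]
  show qFact q n / (qFact q n * 1) = 1
  rw [mul_one, div_self (qFact_ne_zero hq n)]

lemma qFact_succ (n : ℕ) : qFact q (n + 1) = qFact q n * qNat q (n + 1) := rfl

/-- second q-Pascal rule -/
lemma pascal2 (hq : |q| < 1) (n k : ℕ) :
    qBinom q (n + 1) (k + 1) = qBinom q n (k + 1) + q ^ (n - k) * qBinom q n k := by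
  rcases lt_or_ge n k with h | h
  · rw [qBinom_gt h, qBinom_gt (by omega : n < k + 1), qBinom_gt (by omega : n + 1 < k + 1)]
    ring
  · obtain ⟨d, rfl⟩ : ∃ d, n = k + d := ⟨n - k, by omega⟩
    rcases Nat.eq_zero_or_pos d with rfl | hd
    · simp only [Nat.add_zero]
      rw [Nat.sub_self, qBinom_self hq, qBinom_gt (by omega), pow_zero, qBinom_self hq]
      ring
    · obtain ⟨e, rfl⟩ : ∃ e, d = e + 1 := ⟨d - 1, by omega⟩
      have h1 : k + (e + 1) + 1 = (k + 1) + (e + 1) := by omega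
      have h2 : k + (e + 1) = (k + 1) + e := by omega
      have h3 : k + (e + 1) - k = e + 1 := by omega
      rw [h1, qBinom_add, h3]
      rw [show qBinom q (k + (e+1)) (k+1) = qBinom q ((k+1) + e) (k+1) from by rw [h2],
        qBinom_add]
      rw [show qBinom q (k + (e+1)) k = qBinom q (k + (e+1)) k from rfl, qBinom_le (by omega),
        show k + (e + 1) - k = e + 1 from by omega]
      have hk1 : qFact q ((k+1) + (e+1)) = qFact q ((k+1) + e) * qNat q ((e+1) + (k+1)) := by
        rw [show (k+1) + (e+1) = ((k+1) + e) + 1 from by omega, qFact_succ,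
          show (k+1) + e + 1 = (e+1) + (k+1) from by omega]
      have hke : qFact q (k + (e + 1)) = qFact q ((k+1) + e) := by rw [h2]
      rw [hk1, hke, qNat_add (e+1) (k+1), qFact_succ e, qFact_succ k]
      have n1 := qFact_ne_zero hq ((k+1)+e)
      have n2 := qFact_ne_zero hq e
      have n3 := qFact_ne_zero hq k
      have n4 := (qNat_pos hq e).ne'
      have n5 := (qNat_pos hq k).ne'
      field_simp

/-- first q-Pascal rule -/
lemma pascal1 (hq : |q| < 1) (n k : ℕ) :
    qBinom q (n + 1) (k + 1) = q ^ (k + 1) * qBinom q n (k + 1) + qBinom q n k := by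
  rcases lt_or_ge n k with h | h
  · rw [qBinom_gt h, qBinom_gt (by omega : n < k + 1), qBinom_gt (by omega : n + 1 < k + 1)]
    ring
  · obtain ⟨d, rfl⟩ : ∃ d, n = k + d := ⟨n - k, by omega⟩
    rcases Nat.eq_zero_or_pos d with rfl | hd
    · simp only [Nat.add_zero]
      rw [qBinom_self hq, qBinom_gt (by omega), qBinom_self hq]
      ring
    · obtain ⟨e, rfl⟩ : ∃ e, d = e + 1 := ⟨d - 1, by omega⟩
      have h1 : k + (e + 1) + 1 = (k + 1) + (e + 1) := by omega
      have h2 : k + (e + 1) = (k + 1) + e := by omega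
      rw [h1, qBinom_add]
      rw [show qBinom q (k + (e+1)) (k+1) = qBinom q ((k+1) + e) (k+1) from by rw [h2],
        qBinom_add]
      rw [qBinom_le (show k ≤ k + (e+1) by omega),
        show k + (e + 1) - k = e + 1 from by omega]
      have hk1 : qFact q ((k+1) + (e+1)) = qFact q ((k+1) + e) * qNat q ((k+1) + (e+1)) := by
        rw [show (k+1) + (e+1) = ((k+1) + e) + 1 from by omega, qFact_succ,
          show (k+1) + e + 1 = (k+1) + (e+1) from by omega]
      have hke : qFact q (k + (e + 1)) = qFact q ((k+1) + e) := by rw [h2]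
      rw [hk1, hke, qNat_add (k+1) (e+1), qFact_succ e, qFact_succ k]
      have n1 := qFact_ne_zero hq ((k+1)+e)
      have n2 := qFact_ne_zero hq e
      have n3 := qFact_ne_zero hq k
      have n4 := (qNat_pos hq e).ne'
      have n5 := (qNat_pos hq k).ne'
      field_simp
      ring

lemma tri_succ (k : ℕ) : (k + 1) * k / 2 = k * (k - 1) / 2 + k := by
  have h1 : (k+1).choose 2 = (k+1) * ((k+1) - 1) / 2 := Nat.choose_two_right (k+1)
  have h2 : k.choose 2 = k * (k - 1) / 2 := Nat.choose_two_right k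
  have h3 : (k+1).choose 2 = k.choose 1 + k.choose 2 := Nat.choose_succ_succ k 1
  simp only [Nat.add_sub_cancel, Nat.choose_one_right] at h1 h3
  omega

/-- the key finite q-identity -/
lemma keyId (hq : |q| < 1) (m N : ℕ) :
    ∑ k ∈ range (m + 1), (-1 : ℝ) ^ k * qBinom q m k * q ^ (k * (k - 1) / 2) *
      ∏ j ∈ range k, (1 - q ^ (N - j)) = q ^ (m * N) := by
  induction m with
  | zero =>
    simp [qBinom_zero hq]
  | succ m ih =>
    set P : ℕ → ℝ := fun k => ∏ j ∈ range k, (1 - q ^ (N - j)) with hP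
    have Pzero : ∀ k, N < k → P k = 0 := by
      intro k hk
      apply Finset.prod_eq_zero (Finset.mem_range.mpr hk)
      simp [Nat.sub_self]
    have Psucc : ∀ k, P (k + 1) = P k * (1 - q ^ (N - k)) := fun k => Finset.prod_range_succ _ k
    have split : ∀ k, (-1 : ℝ) ^ k * qBinom q (m+1) k * q ^ (k * (k - 1) / 2) * P k =
        ((-1 : ℝ) ^ k * qBinom q m k * q ^ (k * (k - 1) / 2) * q ^ k * P k) +
        (if k = 0 then 0 else (-1 : ℝ) ^ k * qBinom q m (k-1) * q ^ (k * (k - 1) / 2) * P k) := by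
      intro k
      match k with
      | 0 => simp [qBinom_zero hq]
      | k + 1 =>
        rw [if_neg (Nat.succ_ne_zero k), pascal1 hq m k]
        simp only [Nat.add_sub_cancel]
        ring
    rw [Finset.sum_congr rfl (fun k _ => split k), Finset.sum_add_distrib]
    have e1 : ∑ k ∈ range (m + 1 + 1),
        ((-1 : ℝ) ^ k * qBinom q m k * q ^ (k * (k - 1) / 2) * q ^ k * P k) =
        ∑ k ∈ range (m + 1), ((-1 : ℝ) ^ k * qBinom q m k * q ^ (k * (k - 1) / 2) * q ^ k * P k) := by
      rw [Finset.sum_range_succ, qBinom_gt (by omega)]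
      ring
    have e2 : ∑ k ∈ range (m + 1 + 1),
        (if k = 0 then (0:ℝ) else (-1 : ℝ) ^ k * qBinom q m (k-1) * q ^ (k * (k - 1) / 2) * P k) =
        ∑ k ∈ range (m + 1),
          -((-1 : ℝ) ^ k * qBinom q m k * q ^ (k * (k - 1) / 2) * q ^ k * (P k * (1 - q ^ (N - k)))) := by
      rw [Finset.sum_range_succ']
      simp only [if_neg (Nat.succ_ne_zero _), if_pos, Nat.add_sub_cancel, add_zero]
      apply Finset.sum_congr rfl
      intro k _
      rw [Psucc k, tri_succ k, pow_add]
      ring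
    rw [e1, e2, ← Finset.sum_add_distrib]
    have e3 : ∀ k ∈ range (m + 1),
        ((-1 : ℝ) ^ k * qBinom q m k * q ^ (k * (k - 1) / 2) * q ^ k * P k) +
        -((-1 : ℝ) ^ k * qBinom q m k * q ^ (k * (k - 1) / 2) * q ^ k * (P k * (1 - q ^ (N - k)))) =
        q ^ N * ((-1 : ℝ) ^ k * qBinom q m k * q ^ (k * (k - 1) / 2) * P k) := by
      intro k hk
      rcases le_or_gt k N with h | h
      · have hqq : q ^ k * q ^ (N - k) = q ^ N := by
          rw [← pow_add]; congr 1; omega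
        rw [← hqq]; ring
      · rw [Pzero k h]; ring
    rw [Finset.sum_congr rfl e3, ← Finset.mul_sum, ih, ← pow_add]
    congr 1
    ring

lemma shiftB (hq : |q| < 1) (n k : ℕ) :
    (1 - q ^ (n + 1 - k)) * qBinom q (n + 1) k = (1 - q ^ (n + 1)) * qBinom q n k := by
  rcases lt_or_ge (n + 1) k with h | h
  · rw [qBinom_gt h, qBinom_gt (by omega : n < k)]; ring
  · rcases eq_or_lt_of_le h with rfl | h'
    · rw [Nat.sub_self, pow_zero, qBinom_gt (by omega : n < n + 1)]; ring
    · have hk : k ≤ n := by omega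
      obtain ⟨d, rfl⟩ : ∃ d, n = k + d := ⟨n - k, by omega⟩
      have h1 : k + d + 1 - k = d + 1 := by omega
      have h2 : k + d + 1 = k + (d + 1) := by omega
      rw [h1, h2, qBinom_le (by omega : k ≤ k + (d+1)), qBinom_le (by omega : k ≤ k + d),
        show k + (d+1) - k = d + 1 from by omega, show k + d - k = d from by omega]
      rw [← one_sub_mul_qNat (d+1), ← one_sub_mul_qNat (k+(d+1)),
        show k + (d + 1) = (k + d) + 1 from by omega, qFact_succ (k+d), qFact_succ d]
      have n1 := qFact_ne_zero hq (k+d)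
      have n2 := qFact_ne_zero hq d
      have n3 := qFact_ne_zero hq k
      have n4 := (qNat_pos hq d).ne'
      field_simp

lemma threeTerm (hq : |q| < 1) (n k : ℕ) :
    qBinom q (n + 2) (k + 1) =
      qBinom q (n + 1) (k + 1) + qBinom q (n + 1) k - (1 - q ^ (n + 1)) * qBinom q n k := by
  have hp := pascal2 hq (n + 1) k
  have hs := shiftB hq n k
  have hnk : (n + 1 : ℕ) - k = n + 1 - k := rfl
  nlinarith [hp, hs]


open Complex in
noncomputable def Fc (q : ℝ) (z : ℂ) (n : ℕ) : ℂ :=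
  ∑ k ∈ range (n + 1), ((qBinom q n k : ℝ) : ℂ) * z ^ (n - k) * (starRingEnd ℂ z) ^ k

open Complex in
lemma Fc_rec (hq : |q| < 1) (z : ℂ) (hz : z * (starRingEnd ℂ z) = 1) (n : ℕ) :
    Fc q z (n + 2) = (z + starRingEnd ℂ z) * Fc q z (n + 1) -
      (1 - (q : ℂ) ^ (n + 1)) * Fc q z n := by
  set w := starRingEnd ℂ z with hw
  have key : ∀ k : ℕ, ((qBinom q (n+2) (k+1) : ℝ) : ℂ) =
      ((qBinom q (n+1) (k+1) : ℝ) : ℂ) + ((qBinom q (n+1) k : ℝ) : ℂ) -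
      (1 - (q:ℂ)^(n+1)) * ((qBinom q n k : ℝ) : ℂ) := by
    intro k
    have := threeTerm hq n k
    push_cast [this]
    ring
  have hA : ∑ k ∈ range (n + 2 + 1), ((qBinom q (n+1) k : ℝ) : ℂ) * z ^ (n + 2 - k) * w ^ k =
      z * Fc q z (n + 1) := by
    rw [Finset.sum_range_succ, qBinom_gt (by omega : n + 1 < n + 2)]
    simp only [Complex.ofReal_zero, zero_mul, mul_zero, add_zero]
    rw [Fc, Finset.mul_sum]
    apply Finset.sum_congr rfl
    intro k hk
    have hk' := Finset.mem_range.mp hk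
    rw [show n + 2 - k = (n + 1 - k) + 1 from by omega, pow_succ]
    ring
  -- main computation
  show ∑ k ∈ range (n + 2 + 1), ((qBinom q (n+2) k : ℝ) : ℂ) * z ^ (n + 2 - k) * w ^ k = _
  rw [Finset.sum_range_succ']
  have congr1 : ∀ k ∈ range (n + 2),
      ((qBinom q (n+2) (k+1) : ℝ) : ℂ) * z ^ (n + 2 - (k+1)) * w ^ (k+1) =
      (((qBinom q (n+1) (k+1) : ℝ) : ℂ) * z ^ (n + 2 - (k+1)) * w ^ (k+1)) +
      (((qBinom q (n+1) k : ℝ) : ℂ) * z ^ (n + 1 - k) * w ^ (k+1)) -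
      ((1 - (q:ℂ)^(n+1)) * ((qBinom q n k : ℝ) : ℂ) * z ^ (n + 1 - k) * w ^ (k+1)) := by
    intro k hk
    rw [key k, show n + 2 - (k+1) = n + 1 - k from by omega]
    ring
  rw [Finset.sum_congr rfl congr1, Finset.sum_sub_distrib, Finset.sum_add_distrib]
  have hA' : (∑ k ∈ range (n + 2), ((qBinom q (n+1) (k+1) : ℝ) : ℂ) * z ^ (n + 2 - (k+1)) * w ^ (k+1))
      + ((qBinom q (n+2) 0 : ℝ) : ℂ) * z ^ (n + 2 - 0) * w ^ 0 = z * Fc q z (n + 1) := by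
    rw [Finset.sum_range_succ'] at hA
    rw [show ((qBinom q (n+2) 0 : ℝ) : ℂ) = ((qBinom q (n+1) 0 : ℝ) : ℂ) from by
      rw [qBinom_zero hq, qBinom_zero hq]]
    exact hA
  have hB : ∑ k ∈ range (n + 2), ((qBinom q (n+1) k : ℝ) : ℂ) * z ^ (n + 1 - k) * w ^ (k+1) =
      w * Fc q z (n + 1) := by
    rw [Fc, Finset.mul_sum]
    apply Finset.sum_congr rfl
    intro k hk
    rw [pow_succ]
    ring
  have hC : ∑ k ∈ range (n + 2),
      (1 - (q:ℂ)^(n+1)) * ((qBinom q n k : ℝ) : ℂ) * z ^ (n + 1 - k) * w ^ (k+1) =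
      (1 - (q:ℂ)^(n+1)) * Fc q z n := by
    rw [Finset.sum_range_succ, qBinom_gt (by omega : n < n + 1)]
    simp only [Complex.ofReal_zero, zero_mul, mul_zero, add_zero]
    rw [Fc, Finset.mul_sum]
    apply Finset.sum_congr rfl
    intro k hk
    have hk' := Finset.mem_range.mp hk
    rw [show n + 1 - k = (n - k) + 1 from by omega]
    have h2 : (1 - (q:ℂ)^(n+1)) * ((qBinom q n k : ℝ) : ℂ) * z ^ ((n - k) + 1) * w ^ (k+1) =
        (z * w) * ((1 - (q:ℂ)^(n+1)) * (((qBinom q n k : ℝ) : ℂ) * z ^ (n - k) * w ^ k)) := by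
      ring
    rw [h2, hz, one_mul]
  rw [hB, hC] at *
  calc (∑ k ∈ range (n + 2), ((qBinom q (n+1) (k+1) : ℝ) : ℂ) * z ^ (n + 2 - (k+1)) * w ^ (k+1))
        + w * Fc q z (n+1) - (1 - (q:ℂ)^(n+1)) * Fc q z n
        + ((qBinom q (n+2) 0 : ℝ) : ℂ) * z ^ (n + 2 - 0) * w ^ 0
      = ((∑ k ∈ range (n + 2), ((qBinom q (n+1) (k+1) : ℝ) : ℂ) * z ^ (n + 2 - (k+1)) * w ^ (k+1))
        + ((qBinom q (n+2) 0 : ℝ) : ℂ) * z ^ (n + 2 - 0) * w ^ 0)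
        + w * Fc q z (n+1) - (1 - (q:ℂ)^(n+1)) * Fc q z n := by ring
    _ = z * Fc q z (n+1) + w * Fc q z (n+1) - (1 - (q:ℂ)^(n+1)) * Fc q z n := by rw [hA']
    _ = (z + w) * Fc q z (n + 1) - (1 - (q:ℂ)^(n+1)) * Fc q z n := by ring

lemma hermite_succ (x : ℝ) (n : ℕ) : qHermite q (n + 2) x =
    x * qHermite q (n + 1) x - qNat q (n + 1) * qHermite q n x := rfl

open Complex in
lemma Fc_eq_qHermite (hq : |q| < 1) (x : ℝ) (z : ℂ) (hz1 : z * (starRingEnd ℂ) z = 1)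
    (hz2 : z + (starRingEnd ℂ) z = ((x * Real.sqrt (1 - q) : ℝ) : ℂ)) (n : ℕ) :
    Fc q z n = ((Real.sqrt (1 - q) ^ n * qHermite q n x : ℝ) : ℂ) := by
  have hq1 : (0:ℝ) < 1 - q := by have := abs_lt.mp hq; linarith
  have hs : Real.sqrt (1 - q) ^ 2 = 1 - q := Real.sq_sqrt hq1.le
  have key : ∀ n : ℕ, Fc q z n = ((Real.sqrt (1 - q) ^ n * qHermite q n x : ℝ) : ℂ) ∧
      Fc q z (n+1) = ((Real.sqrt (1 - q) ^ (n+1) * qHermite q (n+1) x : ℝ) : ℂ) := by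
    intro n
    induction n with
    | zero =>
      constructor
      · show ∑ k ∈ range 1, _ = _
        rw [Finset.sum_range_one, qBinom_zero hq]
        show ((1:ℝ):ℂ) * z ^ 0 * _ ^ 0 = _
        simp [qHermite]
      · show ∑ k ∈ range 2, _ = _
        rw [Finset.sum_range_succ, Finset.sum_range_one, qBinom_zero hq, qBinom_self hq]
        show ((1:ℝ):ℂ) * z ^ 1 * _ ^ 0 + ((1:ℝ):ℂ) * z ^ 0 * _ ^ 1 = _
        simp only [pow_zero, pow_one, Complex.ofReal_one, one_mul, mul_one]
        rw [hz2]
        show _ = ((Real.sqrt (1-q) ^ 1 * qHermite q 1 x : ℝ) : ℂ)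
        have : qHermite q 1 x = x := rfl
        rw [this, pow_one]
        push_cast
        ring
    | succ n ih =>
      refine ⟨ih.2, ?_⟩
      rw [show n + 1 + 1 = n + 2 from rfl, Fc_rec hq z hz1 n, ih.1, ih.2, hz2]
      have e1 : (1 - (q:ℂ)^(n+1)) = (((1 - q^(n+1)) : ℝ) : ℂ) := by push_cast; ring
      rw [e1, ← Complex.ofReal_mul, ← Complex.ofReal_mul, ← Complex.ofReal_sub]
      congr 1
      rw [hermite_succ, show (1:ℝ) - q^(n+1) = (1-q) * qNat q (n+1) from
        (one_sub_mul_qNat _).symm]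
      linear_combination (qNat q (n+1) * qHermite q n x * Real.sqrt (1-q) ^ n) * hs
  exact (key n).1

lemma weier (f : ℕ → ℝ) (h0 : ∀ j, 0 ≤ f j) (h1 : ∀ j, f j ≤ 1) (n : ℕ) :
    1 - ∑ j ∈ range n, f j ≤ ∏ j ∈ range n, (1 - f j) := by
  induction n with
  | zero => simp
  | succ n ih =>
    have hpn : (0:ℝ) ≤ ∏ j ∈ range n, (1 - f j) :=
      Finset.prod_nonneg fun j _ => by linarith [h1 j]
    have hsn : (0:ℝ) ≤ ∑ j ∈ range n, f j := Finset.sum_nonneg fun j _ => h0 j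
    rw [Finset.prod_range_succ, Finset.sum_range_succ]
    nlinarith [h0 n, h1 n]

lemma geomSumLe (r : ℝ) (h0 : 0 ≤ r) (h1 : r < 1) (n : ℕ) :
    ∑ j ∈ range n, r ^ j ≤ 1 / (1 - r) := by
  have h2 : (0:ℝ) < 1 - r := by linarith
  rw [le_div_iff₀ h2]
  have := geom_sum_mul r n
  have h3 : (0:ℝ) ≤ r ^ n := pow_nonneg h0 n
  nlinarith

/-- positive uniform lower bound for the partial products ∏ (1 - |q|^(j+1)) -/
lemma exists_lower (hq : |q| < 1) :
    ∃ L > 0, ∀ n, L ≤ ∏ j ∈ range n, (1 - |q| ^ (j + 1)) := by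
  have ha0 : 0 ≤ |q| := abs_nonneg q
  have ha1 : |q| < 1 := hq
  obtain ⟨J, hJ⟩ : ∃ J : ℕ, |q| ^ J < (1 - |q|) / 2 :=
    exists_pow_lt_of_lt_one (by linarith) ha1
  have hfac : ∀ j : ℕ, 0 < 1 - |q| ^ (j + 1) := by
    intro j
    have : |q| ^ (j+1) < 1 := pow_lt_one₀ ha0 ha1 (Nat.succ_ne_zero j)
    linarith
  set PJ := ∏ j ∈ range J, (1 - |q| ^ (j + 1)) with hPJ
  have hPJpos : 0 < PJ := Finset.prod_pos fun j _ => hfac j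
  refine ⟨PJ / 2, by positivity, fun n => ?_⟩
  rcases le_or_gt n J with h | h
  · have : PJ ≤ ∏ j ∈ range n, (1 - |q| ^ (j + 1)) := by
      rw [hPJ, ← Finset.prod_range_mul_prod_Ico _ h]
      have htail : ∏ j ∈ Finset.Ico n J, (1 - |q| ^ (j + 1)) ≤ 1 :=
        Finset.prod_le_one (fun j _ => (hfac j).le)
          (fun j _ => by have := pow_nonneg ha0 (j+1); linarith)
      nlinarith [Finset.prod_pos (fun j (_ : j ∈ range n) => hfac j)]
    linarith
  · rw [← Finset.prod_range_mul_prod_Ico _ h.le]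
    have htail : (1:ℝ)/2 ≤ ∏ j ∈ Finset.Ico J n, (1 - |q| ^ (j + 1)) := by
      rw [Finset.prod_Ico_eq_prod_range]
      have hW := weier (fun i => |q| ^ (J + i + 1)) (fun i => pow_nonneg ha0 _)
        (fun i => (pow_le_one₀ ha0 ha1.le)) (n - J)
      have hsum : ∑ i ∈ range (n - J), |q| ^ (J + i + 1) ≤ 1/2 := by
        have : ∀ i ∈ range (n - J), |q| ^ (J + i + 1) = |q| ^ (J+1) * |q| ^ i := by
          intro i _; rw [← pow_add]; congr 1; omega
        rw [Finset.sum_congr rfl this, ← Finset.mul_sum]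
        have hg := geomSumLe |q| ha0 ha1 (n - J)
        have hJ1 : |q| ^ (J + 1) ≤ |q| ^ J * |q| := by rw [pow_succ]
        have hgs : (0:ℝ) ≤ ∑ j ∈ range (n - J), |q| ^ j :=
          Finset.sum_nonneg fun j _ => pow_nonneg ha0 j
        have h2 : (0:ℝ) < 1 - |q| := by linarith
        calc |q| ^ (J+1) * ∑ j ∈ range (n - J), |q| ^ j
            ≤ |q| ^ (J+1) * (1 / (1 - |q|)) := by
              apply mul_le_mul_of_nonneg_left hg (pow_nonneg ha0 _)
          _ ≤ ((1 - |q|)/2) * (1 / (1 - |q|)) := by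
              apply mul_le_mul_of_nonneg_right _ (by positivity)
              calc |q| ^ (J+1) ≤ |q| ^ J := pow_le_pow_of_le_one ha0 ha1.le (by omega)
                _ ≤ (1 - |q|)/2 := hJ.le
          _ = 1/2 := by field_simp
      calc (1:ℝ)/2 ≤ 1 - ∑ i ∈ range (n - J), |q| ^ (J + i + 1) := by linarith
        _ ≤ ∏ i ∈ range (n - J), (1 - |q| ^ (J + i + 1)) := hW
    calc PJ / 2 = PJ * (1/2) := by ring
      _ ≤ PJ * ∏ j ∈ Finset.Ico J n, (1 - |q| ^ (j + 1)) :=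
          mul_le_mul_of_nonneg_left htail hPJpos.le

lemma prod_one_sub_q (n : ℕ) : (1 - q) ^ n * qFact q n = ∏ j ∈ range n, (1 - q ^ (j + 1)) := by
  induction n with
  | zero => simp [qFact]
  | succ n ih =>
    rw [Finset.prod_range_succ, ← ih, qFact_succ, pow_succ]
    have h := one_sub_mul_qNat (q := q) (n + 1)
    linear_combination ((1 - q) ^ n * qFact q n) * h

lemma qBinom_nonneg (hq : |q| < 1) (n k : ℕ) : 0 ≤ qBinom q n k := by
  rcases le_or_gt k n with h | h
  · rw [qBinom_le h]
    exact div_nonneg (qFact_pos hq n).le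
      (mul_nonneg (qFact_pos hq (n-k)).le (qFact_pos hq k).le)
  · rw [qBinom_gt h]

lemma exists_binom_bound (hq : |q| < 1) : ∃ K > 0, ∀ n k : ℕ, qBinom q n k ≤ K := by
  obtain ⟨L, hL, hLb⟩ := exists_lower hq
  have ha0 : 0 ≤ |q| := abs_nonneg q
  set U := Real.exp (|q| / (1 - |q|)) with hU
  have hq1 : (0:ℝ) < 1 - q := by have := abs_lt.mp hq; linarith
  have pow_bd : ∀ j : ℕ, q ^ (j+1) ≤ |q| ^ (j+1) ∧ -(|q| ^ (j+1)) ≤ q ^ (j+1) := by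
    intro j
    constructor
    · calc q ^ (j+1) ≤ |q ^ (j+1)| := le_abs_self _
        _ = |q| ^ (j+1) := abs_pow q (j+1)
    · rw [← abs_pow]
      exact neg_abs_le _
  have upper : ∀ n, (1 - q) ^ n * qFact q n ≤ U := by
    intro n
    rw [prod_one_sub_q]
    calc ∏ j ∈ range n, (1 - q ^ (j + 1))
        ≤ ∏ j ∈ range n, Real.exp (|q| ^ (j+1)) := by
          apply Finset.prod_le_prod
          · intro j _
            have := (pow_bd j).1
            have h2 : |q| ^ (j+1) < 1 := pow_lt_one₀ ha0 hq (Nat.succ_ne_zero j)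
            linarith
          · intro j _
            have := Real.add_one_le_exp (|q| ^ (j+1))
            have := (pow_bd j).2
            linarith
      _ = Real.exp (∑ j ∈ range n, |q| ^ (j+1)) := (Real.exp_sum _ _).symm
      _ ≤ U := by
          rw [hU]
          apply Real.exp_le_exp.mpr
          have e : ∀ j ∈ range n, |q| ^ (j+1) = |q| * |q| ^ j := fun j _ => pow_succ' |q| j
          rw [Finset.sum_congr rfl e, ← Finset.mul_sum]
          rw [div_eq_mul_inv, ← one_div]
          exact mul_le_mul_of_nonneg_left (geomSumLe |q| ha0 hq n) ha0
  have lower : ∀ n, L ≤ (1 - q) ^ n * qFact q n := by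
    intro n
    rw [prod_one_sub_q]
    refine le_trans (hLb n) (Finset.prod_le_prod ?_ ?_)
    · intro j _
      have h2 : |q| ^ (j+1) < 1 := pow_lt_one₀ ha0 hq (Nat.succ_ne_zero j)
      linarith
    · intro j _
      have := (pow_bd j).1
      linarith
  refine ⟨U / (L * L), by positivity, fun n k => ?_⟩
  rcases le_or_gt k n with h | h
  · have e : qBinom q n k = ((1-q)^n * qFact q n) /
        (((1-q)^(n-k) * qFact q (n-k)) * ((1-q)^k * qFact q k)) := by
      rw [qBinom_le h]
      rw [div_eq_div_iff (mul_ne_zero (qFact_ne_zero hq _) (qFact_ne_zero hq _))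
        (mul_ne_zero (mul_ne_zero (pow_ne_zero _ hq1.ne') (qFact_ne_zero hq _))
          (mul_ne_zero (pow_ne_zero _ hq1.ne') (qFact_ne_zero hq _)))]
      rw [show (1-q)^n = (1-q)^(n-k) * (1-q)^k from by
        rw [← pow_add]; congr 1; omega]
      ring
    rw [e]
    apply div_le_div₀ (Real.exp_nonneg _) (upper n) (mul_pos hL hL)
    have h1 := lower (n - k)
    have h2 := lower k
    have p1 : (0:ℝ) < (1-q)^(n-k) * qFact q (n-k) :=
      mul_pos (pow_pos hq1 _) (qFact_pos hq _)
    have p2 : (0:ℝ) < (1-q)^k * qFact q k :=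
      mul_pos (pow_pos hq1 _) (qFact_pos hq _)
    nlinarith
  · rw [qBinom_gt h]
    exact div_nonneg (Real.exp_nonneg _) (mul_pos hL hL).le

open Complex in
lemma exists_z (hq : |q| < 1) (x : ℝ) (hx2 : x ^ 2 * (1 - q) ≤ 4) :
    ∃ z : ℂ, z * (starRingEnd ℂ) z = 1 ∧
      z + (starRingEnd ℂ) z = ((x * Real.sqrt (1 - q) : ℝ) : ℂ) := by
  have hq1 : (0:ℝ) < 1 - q := by have := abs_lt.mp hq; linarith
  have hs : Real.sqrt (1 - q) ^ 2 = 1 - q := Real.sq_sqrt hq1.le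
  set c : ℝ := x * Real.sqrt (1 - q) / 2 with hc
  have hc2 : c ^ 2 ≤ 1 := by
    have : c ^ 2 = x ^ 2 * (1 - q) / 4 := by rw [hc]; rw [div_pow, mul_pow, hs]; ring
    rw [this]; linarith
  set b : ℝ := Real.sqrt (1 - c ^ 2) with hb
  have hb2 : b ^ 2 = 1 - c ^ 2 := Real.sq_sqrt (by linarith)
  refine ⟨(c : ℂ) + (b : ℂ) * Complex.I, ?_, ?_⟩
  · have hconj : (starRingEnd ℂ) ((c : ℂ) + (b : ℂ) * Complex.I) =
        (c : ℂ) - (b : ℂ) * Complex.I := by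
      simp [map_add, map_mul, Complex.conj_ofReal, Complex.conj_I]
      ring
    rw [hconj]
    have : ((c : ℂ) + (b : ℂ) * Complex.I) * ((c : ℂ) - (b : ℂ) * Complex.I) =
        ((c:ℂ)^2 + (b:ℂ)^2) := by
      have hI : Complex.I ^ 2 = -1 := Complex.I_sq
      linear_combination (-(b:ℂ)^2) * hI
    rw [this]
    push_cast [← Complex.ofReal_pow]
    rw [show ((c^2 : ℝ) : ℂ) + ((b^2:ℝ):ℂ) = (((c^2 + b^2) : ℝ) : ℂ) from by push_cast; ring]
    rw [hb2]
    norm_num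
  · have hconj : (starRingEnd ℂ) ((c : ℂ) + (b : ℂ) * Complex.I) =
        (c : ℂ) - (b : ℂ) * Complex.I := by
      simp [map_add, map_mul, Complex.conj_ofReal, Complex.conj_I]
      ring
    rw [hconj, hc]
    push_cast
    ring

open Complex in
lemma hermite_bound (hq : |q| < 1) :
    ∃ K > 0, ∀ x : ℝ, x ^ 2 * (1 - q) ≤ 4 → ∀ n : ℕ,
      |qHermite q n x| ≤ (n + 1) * K / Real.sqrt (1 - q) ^ n := by
  obtain ⟨K, hK, hKb⟩ := exists_binom_bound hq
  have hq1 : (0:ℝ) < 1 - q := by have := abs_lt.mp hq; linarith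
  have hspos : (0:ℝ) < Real.sqrt (1 - q) := Real.sqrt_pos.mpr hq1
  refine ⟨K, hK, fun x hx2 n => ?_⟩
  obtain ⟨z, hz1, hz2⟩ := exists_z hq x hx2
  have hzn : ‖z‖ = 1 := by
    have h1 : z * (starRingEnd ℂ) z = ((Complex.normSq z : ℝ) : ℂ) := (Complex.mul_conj z)
    rw [h1] at hz1
    have h2 : Complex.normSq z = 1 := by exact_mod_cast hz1
    have h3 : ‖z‖ ^ 2 = 1 := by rw [← Complex.normSq_eq_norm_sq]; exact h2
    nlinarith [norm_nonneg z]
  have hFc := Fc_eq_qHermite hq x z hz1 hz2 n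
  have hnorm : ‖Fc q z n‖ = Real.sqrt (1 - q) ^ n * |qHermite q n x| := by
    rw [hFc, Complex.norm_real, Real.norm_eq_abs, abs_mul, _root_.abs_pow, _root_.abs_of_pos hspos]
  have hbound : ‖Fc q z n‖ ≤ (n + 1) * K := by
    rw [Fc]
    refine le_trans (norm_sum_le _ _) ?_
    have hterm : ∀ k ∈ range (n + 1),
        ‖((qBinom q n k : ℝ) : ℂ) * z ^ (n - k) * (starRingEnd ℂ) z ^ k‖ ≤ K := by
      intro k _
      rw [norm_mul, norm_mul, norm_pow, norm_pow, Complex.norm_real, Real.norm_eq_abs, hzn]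
      have hzc : ‖(starRingEnd ℂ) z‖ = 1 := by rw [RCLike.norm_conj, hzn]
      rw [hzc, one_pow, one_pow, mul_one, mul_one,
        _root_.abs_of_nonneg (qBinom_nonneg hq n k)]
      exact hKb n k
    calc ∑ k ∈ range (n + 1), ‖((qBinom q n k : ℝ) : ℂ) * z ^ (n - k) * (starRingEnd ℂ) z ^ k‖
        ≤ ∑ _k ∈ range (n + 1), K := Finset.sum_le_sum hterm
      _ = (n + 1) * K := by rw [Finset.sum_const, Finset.card_range, nsmul_eq_mul]; push_cast; ring
  rw [le_div_iff₀ (pow_pos hspos n)]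
  calc |qHermite q n x| * Real.sqrt (1 - q) ^ n
      = ‖Fc q z n‖ := by rw [hnorm]; ring
    _ ≤ (n + 1) * K := hbound

lemma exists_qFact_lower (hq : |q| < 1) : ∃ L > 0, ∀ n, L ≤ (1 - q) ^ n * qFact q n := by
  obtain ⟨L, hL, hLb⟩ := exists_lower hq
  have ha0 : 0 ≤ |q| := abs_nonneg q
  refine ⟨L, hL, fun n => ?_⟩
  rw [prod_one_sub_q]
  refine le_trans (hLb n) (Finset.prod_le_prod ?_ ?_)
  · intro j _
    have h2 : |q| ^ (j+1) < 1 := pow_lt_one₀ ha0 hq (Nat.succ_ne_zero j)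
    linarith
  · intro j _
    have : q ^ (j+1) ≤ |q| ^ (j+1) := by
      calc q ^ (j+1) ≤ |q ^ (j+1)| := le_abs_self _
        _ = |q| ^ (j+1) := abs_pow q (j+1)
    linarith

lemma summable_term (hq : |q| < 1) {ρ x y : ℝ} (hρ : |ρ| < 1)
    (hx2 : x ^ 2 * (1 - q) ≤ 4) (hy2 : y ^ 2 * (1 - q) ≤ 4) (a b : ℕ) :
    Summable (fun n : ℕ => ρ ^ n / qFact q n * qHermite q (n + a) x * qHermite q (n + b) y) := by
  obtain ⟨K, hK, hKb⟩ := hermite_bound hq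
  obtain ⟨L, hL, hLb⟩ := exists_qFact_lower hq
  have hq1 : (0:ℝ) < 1 - q := by have := abs_lt.mp hq; linarith
  set s : ℝ := Real.sqrt (1 - q) with hsdef
  have hs : s ^ 2 = 1 - q := Real.sq_sqrt hq1.le
  have hspos : (0:ℝ) < s := Real.sqrt_pos.mpr hq1
  set C : ℝ := K ^ 2 / (L * s ^ (a + b)) with hC
  have hCpos : 0 < C := by positivity
  have hle : ∀ n : ℕ,
      |ρ ^ n / qFact q n * qHermite q (n + a) x * qHermite q (n + b) y| ≤
      C * (((n:ℝ) + a + 1) * ((n:ℝ) + b + 1) * |ρ| ^ n) := by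
    intro n
    have hf := qFact_pos hq n
    have hfl : 1 / qFact q n ≤ (1 - q) ^ n / L := by
      rw [div_le_div_iff₀ hf hL]
      have := hLb n
      nlinarith
    have hH1 := hKb x hx2 (n + a)
    have hH2 := hKb y hy2 (n + b)
    have e1 : |ρ ^ n / qFact q n| ≤ |ρ| ^ n * ((1 - q) ^ n / L) := by
      rw [abs_div, abs_pow, abs_of_pos hf, div_eq_mul_one_div]
      exact mul_le_mul_of_nonneg_left hfl (pow_nonneg (abs_nonneg ρ) n)
    have step : |ρ ^ n / qFact q n * qHermite q (n + a) x * qHermite q (n + b) y| ≤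
        (|ρ| ^ n * ((1 - q) ^ n / L)) * (((n:ℝ) + a + 1) * K / s ^ (n + a)) *
          (((n:ℝ) + b + 1) * K / s ^ (n + b)) := by
      rw [abs_mul, abs_mul]
      have p1 : (0:ℝ) ≤ |ρ| ^ n * ((1 - q) ^ n / L) := by positivity
      have p2 : (0:ℝ) ≤ ((n:ℝ) + a + 1) * K / s ^ (n + a) := by positivity
      have hH1' : |qHermite q (n + a) x| ≤ ((n:ℝ) + a + 1) * K / s ^ (n + a) := by
        refine le_trans hH1 (le_of_eq ?_)
        push_cast
        ring
      have hH2' : |qHermite q (n + b) y| ≤ ((n:ℝ) + b + 1) * K / s ^ (n + b) := by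
        refine le_trans hH2 (le_of_eq ?_)
        push_cast
        ring
      exact mul_le_mul (mul_le_mul e1 hH1' (abs_nonneg _) p1) hH2' (abs_nonneg _)
        (mul_nonneg p1 p2)
    refine le_trans step (le_of_eq ?_)
    rw [hC, show (1 - q) ^ n = (s ^ 2) ^ n from by rw [hs], ← pow_mul]
    have hsne : s ≠ 0 := hspos.ne'
    field_simp
    ring
  have hsum : Summable (fun n : ℕ => ((n:ℝ) + a + 1) * ((n:ℝ) + b + 1) * |ρ| ^ n) := by
    have hr : ‖|ρ|‖ < 1 := by rwa [Real.norm_eq_abs, abs_abs]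
    have h0 := summable_pow_mul_geometric_of_norm_lt_one (R := ℝ) 0 hr
    have h1 := summable_pow_mul_geometric_of_norm_lt_one (R := ℝ) 1 hr
    have h2 := summable_pow_mul_geometric_of_norm_lt_one (R := ℝ) 2 hr
    have hcomb := (h2.add (h1.mul_left ((a:ℝ) + b + 2))).add
      (h0.mul_left (((a:ℝ) + 1) * ((b:ℝ) + 1)))
    apply hcomb.congr
    intro n
    push_cast
    ring
  exact Summable.of_abs (Summable.of_nonneg_of_le (fun n => abs_nonneg _) hle (hsum.mul_left C))


lemma bridge (hq : |q| < 1) (k N : ℕ) (h : k ≤ N) :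
    (1 - q) ^ k * qFact q N = (∏ j ∈ range k, (1 - q ^ (N - j))) * qFact q (N - k) := by
  induction k with
  | zero => simp
  | succ k ih =>
    have hk : k ≤ N := by omega
    have e1 : N - k = (N - (k + 1)) + 1 := by omega
    have e2 : (1 - q) * qNat q (N - k) = 1 - q ^ (N - k) := one_sub_mul_qNat (N - k)
    have e3 : qFact q (N - k) = qFact q (N - (k+1)) * qNat q (N - k) := by
      rw [e1, qFact_succ, ← e1]
    calc (1 - q) ^ (k+1) * qFact q N = (1 - q) * ((1 - q) ^ k * qFact q N) := by ring
      _ = (1 - q) * ((∏ j ∈ range k, (1 - q ^ (N - j))) * qFact q (N - k)) := by rw [ih hk]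
      _ = (∏ j ∈ range k, (1 - q ^ (N - j))) * ((1 - q) * qNat q (N - k)) *
            qFact q (N - (k+1)) := by rw [e3]; ring
      _ = (∏ j ∈ range (k+1), (1 - q ^ (N - j))) * qFact q (N - (k+1)) := by
            rw [e2, Finset.prod_range_succ]

lemma sq_mem_bound (hq : |q| < 1) {x : ℝ} (hx : x ∈ Sq q) : x ^ 2 * (1 - q) ≤ 4 := by
  have hq1 : (0:ℝ) < 1 - q := by have := abs_lt.mp hq; linarith
  have hs : Real.sqrt (1 - q) ^ 2 = 1 - q := Real.sq_sqrt hq1.le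
  have hspos : (0:ℝ) < Real.sqrt (1 - q) := Real.sqrt_pos.mpr hq1
  obtain ⟨h1, h2⟩ := hx
  have h3 : x ^ 2 ≤ (2 / Real.sqrt (1 - q)) ^ 2 := sq_le_sq' h1 h2
  have h4 : (2 / Real.sqrt (1 - q)) ^ 2 * (1 - q) = 4 := by
    rw [div_pow, hs]
    field_simp
    norm_num
  nlinarith


/-- γ_{i,j}(x,y|ρ q^m, q) = Σ_{k=0}^m (-1)^k [m choose k]_q q^{k(k-1)/2}
(1-q)^k ρ^k γ_{i+k,j+k}(x,y|ρ,q). -/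
theorem statement2 (q ρ x y : ℝ) (hq : |q| < 1) (hρ : |ρ| < 1)
    (hx : x ∈ Sq q) (hy : y ∈ Sq q) (i j m : ℕ) :
    gammaPM q (ρ * q ^ m) i j x y =
      ∑ k ∈ Finset.range (m + 1),
        (-1 : ℝ) ^ k * qBinom q m k * q ^ (k * (k - 1) / 2) * (1 - q) ^ k * ρ ^ k *
          gammaPM q ρ (i + k) (j + k) x y := by
  classical
  have hx2 := sq_mem_bound hq hx
  have hy2 := sq_mem_bound hq hy
  set c : ℕ → ℝ := fun k => (-1 : ℝ) ^ k * qBinom q m k * q ^ (k * (k - 1) / 2) * (1 - q) ^ k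
    with hc
  set t : ℕ → ℕ → ℝ := fun k N => if k ≤ N then
      ρ ^ N / qFact q (N - k) * qHermite q (N + i) x * qHermite q (N + j) y else 0 with ht
  have hshift : ∀ k, HasSum (t k) (ρ ^ k * gammaPM q ρ (i + k) (j + k) x y) := by
    intro k
    have hS := (summable_term hq hρ hx2 hy2 (i + k) (j + k)).hasSum
    have he : (fun n => t k (n + k)) = (fun n => ρ ^ k *
        (ρ ^ n / qFact q n * qHermite q (n + (i + k)) x * qHermite q (n + (j + k)) y)) := by
      funext n
      show (if k ≤ n + k then _ else (0:ℝ)) = _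
      rw [if_pos (by omega : k ≤ n + k),
        show n + k - k = n from by omega, show n + k + i = n + (i + k) from by omega,
        show n + k + j = n + (j + k) from by omega, pow_add]
      ring
    have h2 : HasSum (fun n => t k (n + k)) (ρ ^ k * gammaPM q ρ (i + k) (j + k) x y) := by
      rw [he, gammaPM]
      exact hS.mul_left _
    have h3 := (hasSum_nat_add_iff k).mp h2
    rwa [Finset.sum_eq_zero (fun l hl => by
        show (if k ≤ l then _ else (0:ℝ)) = 0
        rw [if_neg (by simp only [Finset.mem_range] at hl; omega)]),
      add_zero] at h3
  have termwise : ∀ N : ℕ, (ρ * q ^ m) ^ N / qFact q N * qHermite q (N + i) x *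
      qHermite q (N + j) y = ∑ k ∈ range (m + 1), c k * t k N := by
    intro N
    have hfN := qFact_ne_zero hq N
    have step : ∀ k ∈ range (m + 1), c k * t k N =
        ((-1 : ℝ) ^ k * qBinom q m k * q ^ (k * (k - 1) / 2) *
          ∏ j' ∈ range k, (1 - q ^ (N - j'))) *
        (ρ ^ N / qFact q N * qHermite q (N + i) x * qHermite q (N + j) y) := by
      intro k _
      rcases le_or_gt k N with h | h
      · have hb := bridge hq k N h
        have hfNk := qFact_ne_zero hq (N - k)
        rw [hc, ht]
        show ((-1 : ℝ) ^ k * qBinom q m k * q ^ (k * (k - 1) / 2) * (1-q)^k) *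
          (if k ≤ N then ρ ^ N / qFact q (N - k) * qHermite q (N + i) x *
            qHermite q (N + j) y else 0) = _
        rw [if_pos h]
        field_simp
        linear_combination (qBinom q m k * q ^ (k * (k - 1) / 2) * ρ ^ N *
          qHermite q (N + i) x * qHermite q (N + j) y) * hb
      · have hz : (∏ j' ∈ range k, (1 - q ^ (N - j'))) = 0 := by
          apply Finset.prod_eq_zero (Finset.mem_range.mpr h)
          rw [Nat.sub_self]
          ring
        rw [hz, ht]
        show _ * (if k ≤ N then _ else (0:ℝ)) = _
        rw [if_neg (by omega)]
        ring
    rw [Finset.sum_congr rfl step, ← Finset.sum_mul, keyId hq m N, mul_pow]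
    ring
  calc gammaPM q (ρ * q ^ m) i j x y
      = ∑' N : ℕ, ∑ k ∈ range (m + 1), c k * t k N := tsum_congr termwise
    _ = ∑ k ∈ range (m + 1), ∑' N : ℕ, c k * t k N :=
        Summable.tsum_finsetSum (fun k _ => ((hshift k).summable.mul_left (c k)))
    _ = ∑ k ∈ Finset.range (m + 1),
        (-1 : ℝ) ^ k * qBinom q m k * q ^ (k * (k - 1) / 2) * (1 - q) ^ k * ρ ^ k *
          gammaPM q ρ (i + k) (j + k) x y := by
        apply Finset.sum_congr rfl
        intro k _
        rw [tsum_mul_left, (hshift k).tsum_eq, hc]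
        ring
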